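/- For every R ∈ ℝ³ and every q with 0 < q < 2, the function y ↦ |y − R|^{−q} (defined arbitrarily at y = R) satisfies the Kato condition on ℝ³. -/

import Mathlib

open MeasureTheory

/-- A Borel function `v : ℝ^N → ℝ` (with `N = card ι`) satisfies the Kato condition if
`lim_{t → 0⁺} sup_x ∫₀ᵗ ∫ (4πs)^{-N/2} exp(-|x-y|²/(4s)) |v(y)| dy ds = 0`,
where `(4πs)^{-N/2} exp(-|x-y|²/(4s))` is the heat kernel of `e^{sΔ}` on `ℝ^N`. -/
def IsKato {ι : Type*} [Fintype ι] (v : EuclideanSpace ℝ ι → ℝ) : Prop :=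
  Filter.Tendsto
    (fun t : ℝ => ⨆ x : EuclideanSpace ℝ ι,
      ∫⁻ s in Set.Ioc (0 : ℝ) t, ∫⁻ y,
        ENNReal.ofReal ((4 * Real.pi * s) ^ (-(Fintype.card ι : ℝ) / 2) *
          Real.exp (-‖x - y‖ ^ 2 / (4 * s)) * |v y|))
    (nhdsWithin 0 (Set.Ioi 0)) (nhds 0)

open Set Real Filter
open scoped ENNReal


lemma gauss_integrable (s : ℝ) (hs : 0 < s) :
    Integrable (fun v : EuclideanSpace ℝ (Fin 3) => rexp (-(1/(4*s)) * ‖v‖^2)) := by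
  have h := (GaussianFourier.integrable_cexp_neg_mul_sq_norm_add
    (b := (1/(4*s) : ℂ)) (by simpa using by positivity) 0 (0 : EuclideanSpace ℝ (Fin 3))).norm
  refine h.congr (Eventually.of_forall fun v => ?_)
  rw [eq_comm]
  simp [Complex.norm_exp]
  exact Or.inl (by norm_cast)

lemma gauss_eq (s : ℝ) (hs : 0 < s) (x : EuclideanSpace ℝ (Fin 3)) :
    ∫⁻ y : EuclideanSpace ℝ (Fin 3),
      ENNReal.ofReal ((4 * π * s) ^ (-(3:ℝ)/2) * rexp (-‖x - y‖ ^ 2 / (4 * s))) = 1 := by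
  have hc : (0:ℝ) ≤ (4 * π * s) ^ (-(3:ℝ)/2) := by positivity
  calc ∫⁻ y : EuclideanSpace ℝ (Fin 3),
      ENNReal.ofReal ((4 * π * s) ^ (-(3:ℝ)/2) * rexp (-‖x - y‖ ^ 2 / (4 * s)))
      = ∫⁻ y : EuclideanSpace ℝ (Fin 3), ENNReal.ofReal ((4 * π * s) ^ (-(3:ℝ)/2)) *
          (fun z : EuclideanSpace ℝ (Fin 3) => ENNReal.ofReal (rexp (-(1/(4*s)) * ‖z‖^2))) (y - x) := by
        congr 1 with y
        rw [← ENNReal.ofReal_mul hc]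
        congr 2
        rw [norm_sub_rev]
        ring
    _ = ENNReal.ofReal ((4 * π * s) ^ (-(3:ℝ)/2)) *
          ∫⁻ z : EuclideanSpace ℝ (Fin 3), ENNReal.ofReal (rexp (-(1/(4*s)) * ‖z‖^2)) := by
        rw [lintegral_const_mul' _ _ ENNReal.ofReal_ne_top,
          lintegral_sub_right_eq_self
            (fun z : EuclideanSpace ℝ (Fin 3) => ENNReal.ofReal (rexp (-(1/(4*s)) * ‖z‖^2))) x]
    _ = 1 := by
        rw [← ofReal_integral_eq_lintegral_ofReal (gauss_integrable s hs)
            (Eventually.of_forall fun v => (exp_pos _).le),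
          GaussianFourier.integral_rexp_neg_mul_sq_norm (by positivity)]
        rw [← ENNReal.ofReal_mul hc]
        rw [show π / (1/(4*s)) = 4 * π * s by field_simp]
        have h3 : Module.finrank ℝ (EuclideanSpace ℝ (Fin 3)) = 3 := by simp
        rw [h3, ← Real.rpow_add (by positivity)]
        norm_num

lemma ball_bound (q : ℝ) (hq0 : 0 < q) (hq3 : q < 3) (R : EuclideanSpace ℝ (Fin 3)) {ρ : ℝ}
    (hρ : 0 < ρ) :
    ∫⁻ y in Metric.closedBall R ρ, ENNReal.ofReal (‖y - R‖ ^ (-q)) ≤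
      ENNReal.ofReal ((1 + q / (3 - q)) * ρ ^ (3 - q)) *
        volume (Metric.ball (0 : EuclideanSpace ℝ (Fin 3)) 1) := by
  set B := volume (Metric.ball (0 : EuclideanSpace ℝ (Fin 3)) 1) with hB
  have hBne : B ≠ ⊤ := measure_ball_lt_top.ne
  have hfin : Module.finrank ℝ (EuclideanSpace ℝ (Fin 3)) = 3 := by simp
  have hmeas : Measurable fun y : EuclideanSpace ℝ (Fin 3) => ‖y - R‖ ^ (-q) :=
    (measurable_id.sub_const R).norm.pow_const _
  rw [lintegral_eq_lintegral_meas_le _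
    (Eventually.of_forall fun y => rpow_nonneg (norm_nonneg _) _) hmeas.aemeasurable]
  set c := ρ ^ (-q) with hc
  have hcpos : 0 < c := rpow_pos_of_pos hρ _
  set r : ℝ := -q⁻¹ * 3 with hr
  have hrlt : r < -1 := by
    rw [hr, neg_mul, neg_lt_neg_iff, lt_inv_mul_iff₀ hq0, mul_one]
    exact hq3
  have hr1neg : r + 1 < 0 := by linarith
  have hcr : (0:ℝ) < c ^ (r + 1) := rpow_pos_of_pos hcpos _
  -- superlevel sets are contained in balls
  have hsub : ∀ t : ℝ, 0 < t → {a : EuclideanSpace ℝ (Fin 3) | t ≤ ‖a - R‖ ^ (-q)} ⊆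
      Metric.closedBall R (t ^ (-q⁻¹)) := by
    intro t ht a ha
    simp only [mem_setOf_eq] at ha
    have hna : 0 < ‖a - R‖ := by
      rcases eq_or_lt_of_le (norm_nonneg (a - R)) with h | h
      · exfalso
        rw [← h, Real.zero_rpow (by simpa using hq0.ne')] at ha
        exact absurd (ht.trans_le ha) (lt_irrefl 0)
      · exact h
    rw [Metric.mem_closedBall, dist_eq_norm, neg_inv]
    exact (Real.le_rpow_inv_iff_of_neg hna ht (neg_lt_zero.mpr hq0)).mpr ha
  have hlev1 : ∀ t : ℝ, t ∈ Ioc (0:ℝ) c →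
      (volume.restrict (Metric.closedBall R ρ)) {a | t ≤ ‖a - R‖ ^ (-q)} ≤
        ENNReal.ofReal (ρ ^ (3:ℝ)) * B := by
    intro t _
    refine le_trans (measure_mono (subset_univ _)) ?_
    rw [Measure.restrict_apply_univ, Measure.addHaar_closedBall _ _ hρ.le, hfin, ← hB]
    gcongr
    rw [← Real.rpow_natCast ρ 3]
    norm_num
  have hlev2 : ∀ t : ℝ, t ∈ Ioi c →
      (volume.restrict (Metric.closedBall R ρ)) {a | t ≤ ‖a - R‖ ^ (-q)} ≤
        ENNReal.ofReal (t ^ r) * B := by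
    intro t ht
    have ht0 : 0 < t := hcpos.trans ht
    refine le_trans (le_trans (Measure.restrict_apply_le _ _)
      (measure_mono (hsub t ht0))) ?_
    rw [Measure.addHaar_closedBall _ _ (rpow_nonneg ht0.le _), hfin,
      ← Real.rpow_natCast (t ^ (-q⁻¹)) 3, ← Real.rpow_mul ht0.le, ← hB]
    have hcast : -q⁻¹ * ((3:ℕ):ℝ) = r := by rw [hr]; push_cast; ring
    rw [hcast]
  have e1 : ∫⁻ t in Ioi c, ENNReal.ofReal (t ^ r) =
      ENNReal.ofReal (-c ^ (r + 1) / (r + 1)) := by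
    rw [← integral_Ioi_rpow_of_lt hrlt hcpos,
      ofReal_integral_eq_lintegral_ofReal (integrableOn_Ioi_rpow_of_lt hrlt hcpos)
        (ae_restrict_of_forall_mem measurableSet_Ioi fun t ht =>
          rpow_nonneg (hcpos.trans ht).le _)]
  have hnn2 : (0:ℝ) ≤ -c ^ (r + 1) / (r + 1) :=
    div_nonneg_iff.mpr (Or.inr ⟨by linarith, hr1neg.le⟩)
  -- split the integral
  calc ∫⁻ t in Ioi (0:ℝ), (volume.restrict (Metric.closedBall R ρ)) {a | t ≤ ‖a - R‖ ^ (-q)}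
      ≤ ∫⁻ t in Ioc (0:ℝ) c ∪ Ioi c, (volume.restrict (Metric.closedBall R ρ))
          {a | t ≤ ‖a - R‖ ^ (-q)} := lintegral_mono_set Ioi_subset_Ioc_union_Ioi
    _ ≤ (∫⁻ t in Ioc (0:ℝ) c, (volume.restrict (Metric.closedBall R ρ))
          {a | t ≤ ‖a - R‖ ^ (-q)}) + ∫⁻ t in Ioi c, (volume.restrict (Metric.closedBall R ρ))
          {a | t ≤ ‖a - R‖ ^ (-q)} := lintegral_union_le _ _ _
    _ ≤ (∫⁻ _ in Ioc (0:ℝ) c, ENNReal.ofReal (ρ ^ (3:ℝ)) * B) +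
          ∫⁻ t in Ioi c, ENNReal.ofReal (t ^ r) * B :=
        add_le_add (setLIntegral_mono' measurableSet_Ioc hlev1)
          (setLIntegral_mono' measurableSet_Ioi hlev2)
    _ = (ENNReal.ofReal (ρ ^ (3:ℝ) * c) + ENNReal.ofReal (-c ^ (r + 1) / (r + 1))) * B := by
        rw [setLIntegral_const, lintegral_mul_const' _ _ hBne, e1, Real.volume_Ioc, sub_zero,
          add_mul, mul_right_comm, ← ENNReal.ofReal_mul (by positivity)]
    _ = ENNReal.ofReal ((1 + q / (3 - q)) * ρ ^ (3 - q)) * B := by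
        have hq3' : (0:ℝ) < 3 - q := by linarith
        have key1 : ρ ^ (3:ℝ) * c = ρ ^ (3 - q) := by
          rw [hc, ← Real.rpow_add hρ]; congr 1
        have key2 : -c ^ (r + 1) / (r + 1) = q / (3 - q) * ρ ^ (3 - q) := by
          have hexp : -q * (r + 1) = 3 - q := by
            rw [hr]; field_simp; ring
          have hcr1 : c ^ (r + 1) = ρ ^ (3 - q) := by
            rw [hc, ← Real.rpow_mul hρ.le, hexp]
          have hr1 : r + 1 = -((3 - q) / q) := by rw [hr]; field_simp; ring
          rw [hcr1, hr1, neg_div_neg_eq, div_div_eq_mul_div]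
          ring
        rw [← ENNReal.ofReal_add (by positivity) hnn2, key1, key2]
        congr 1
        ring

lemma inner_bound (q : ℝ) (hq0 : 0 < q) (hq2 : q < 2) (R : EuclideanSpace ℝ (Fin 3))
    (v : EuclideanSpace ℝ (Fin 3) → ℝ)
    (hv : ∀ y : EuclideanSpace ℝ (Fin 3), y ≠ R → v y = ‖y - R‖ ^ (-q))
    {s : ℝ} (hs : 0 < s) (x : EuclideanSpace ℝ (Fin 3)) :
    ∫⁻ y, ENNReal.ofReal ((4 * π * s) ^ (-(3:ℝ)/2) * rexp (-‖x - y‖ ^ 2 / (4 * s)) * |v y|) ≤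
      ENNReal.ofReal (((1 + q / (3 - q)) * (4 * π) ^ (-(3:ℝ)/2) + 1) * s ^ (-q/2)) *
        (volume (Metric.ball (0 : EuclideanSpace ℝ (Fin 3)) 1) + 1) := by
  have hq3 : q < 3 := by linarith
  set B := volume (Metric.ball (0 : EuclideanSpace ℝ (Fin 3)) 1) with hB
  set ρ : ℝ := s ^ ((1:ℝ)/2) with hρdef
  have hρ : 0 < ρ := rpow_pos_of_pos hs _
  set K : ℝ := (1 + q / (3 - q)) * (4 * π) ^ (-(3:ℝ)/2) with hK
  have hKnn : 0 ≤ K := by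
    rw [hK]
    have : (0:ℝ) < 3 - q := by linarith
    positivity
  set g : EuclideanSpace ℝ (Fin 3) → ℝ := fun y => ‖y - R‖ ^ (-q) with hg
  -- replace v by g a.e.
  have hvg : ∀ y : EuclideanSpace ℝ (Fin 3), y ≠ R → |v y| = g y := fun y hy => by
    rw [hv y hy, hg, abs_of_nonneg (rpow_nonneg (norm_nonneg _) _)]
  have habs : ∀ᵐ y : EuclideanSpace ℝ (Fin 3), |v y| = g y := by
    rw [ae_iff]
    refine measure_mono_null (fun y hy => ?_) (measure_singleton R)
    simp only [mem_setOf_eq] at hy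
    simp only [mem_singleton_iff]
    by_contra hyR
    exact hy (hvg y hyR)
  have hae : (fun y : EuclideanSpace ℝ (Fin 3) =>
      ENNReal.ofReal ((4 * π * s) ^ (-(3:ℝ)/2) * rexp (-‖x - y‖ ^ 2 / (4 * s)) * |v y|)) =ᵐ[volume]
      (fun y => ENNReal.ofReal ((4 * π * s) ^ (-(3:ℝ)/2) * rexp (-‖x - y‖ ^ 2 / (4 * s)) * g y)) :=
    habs.mono fun y h => by simp only []; rw [h]
  rw [lintegral_congr_ae hae]
  rw [← lintegral_add_compl _ (measurableSet_closedBall (x := R) (ε := ρ))]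
  have hc1 : (0:ℝ) ≤ (4 * π * s) ^ (-(3:ℝ)/2) := by positivity
  have near : ∫⁻ y in Metric.closedBall R ρ,
      ENNReal.ofReal ((4 * π * s) ^ (-(3:ℝ)/2) * rexp (-‖x - y‖ ^ 2 / (4 * s)) * g y) ≤
      ENNReal.ofReal (K * s ^ (-q/2)) * B := by
    calc ∫⁻ y in Metric.closedBall R ρ,
        ENNReal.ofReal ((4 * π * s) ^ (-(3:ℝ)/2) * rexp (-‖x - y‖ ^ 2 / (4 * s)) * g y)
        ≤ ∫⁻ y in Metric.closedBall R ρ,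
            ENNReal.ofReal ((4 * π * s) ^ (-(3:ℝ)/2)) * ENNReal.ofReal (g y) := by
          refine setLIntegral_mono' measurableSet_closedBall fun y _ => ?_
          rw [← ENNReal.ofReal_mul hc1]
          apply ENNReal.ofReal_le_ofReal
          have h1 : rexp (-‖x - y‖ ^ 2 / (4 * s)) ≤ 1 := by
            rw [Real.exp_le_one_iff]
            have : (0:ℝ) ≤ ‖x - y‖ ^ 2 := sq_nonneg _
            have h4s : (0:ℝ) < 4 * s := by linarith
            exact div_nonpos_of_nonpos_of_nonneg (by linarith) h4s.le
          calc (4 * π * s) ^ (-(3:ℝ)/2) * rexp (-‖x - y‖ ^ 2 / (4 * s)) * g y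
              ≤ (4 * π * s) ^ (-(3:ℝ)/2) * 1 * g y := by
                have hgnn : 0 ≤ g y := rpow_nonneg (norm_nonneg _) _
                gcongr
            _ = (4 * π * s) ^ (-(3:ℝ)/2) * g y := by ring
      _ = ENNReal.ofReal ((4 * π * s) ^ (-(3:ℝ)/2)) *
            ∫⁻ y in Metric.closedBall R ρ, ENNReal.ofReal (g y) :=
          lintegral_const_mul' _ _ ENNReal.ofReal_ne_top
      _ ≤ ENNReal.ofReal ((4 * π * s) ^ (-(3:ℝ)/2)) *
            (ENNReal.ofReal ((1 + q / (3 - q)) * ρ ^ (3 - q)) * B) := by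
          gcongr
          exact ball_bound q hq0 hq3 R hρ
      _ = ENNReal.ofReal (K * s ^ (-q/2)) * B := by
          rw [← mul_assoc, ← ENNReal.ofReal_mul hc1]
          congr 2
          have hsplit : (4 * π * s) ^ (-(3:ℝ)/2) = (4 * π) ^ (-(3:ℝ)/2) * s ^ (-(3:ℝ)/2) := by
            rw [← Real.mul_rpow (by positivity) hs.le]
          have hρpow : ρ ^ (3 - q) = s ^ ((1:ℝ)/2 * (3 - q)) := by
            rw [hρdef, ← Real.rpow_mul hs.le]
          have hspow : s ^ (-(3:ℝ)/2) * s ^ ((1:ℝ)/2 * (3 - q)) = s ^ (-q/2) := by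
            rw [← Real.rpow_add hs]
            congr 1
            ring
          rw [hsplit, hρpow, hK]
          calc (4 * π) ^ (-(3:ℝ)/2) * s ^ (-(3:ℝ)/2) * ((1 + q / (3 - q)) * s ^ ((1:ℝ)/2 * (3 - q)))
              = (1 + q / (3 - q)) * (4 * π) ^ (-(3:ℝ)/2) *
                  (s ^ (-(3:ℝ)/2) * s ^ ((1:ℝ)/2 * (3 - q))) := by ring
            _ = (1 + q / (3 - q)) * (4 * π) ^ (-(3:ℝ)/2) * s ^ (-q/2) := by rw [hspow]
  have far : ∫⁻ y in (Metric.closedBall R ρ)ᶜ,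
      ENNReal.ofReal ((4 * π * s) ^ (-(3:ℝ)/2) * rexp (-‖x - y‖ ^ 2 / (4 * s)) * g y) ≤
      ENNReal.ofReal (s ^ (-q/2)) := by
    have hρq : ρ ^ (-q) = s ^ (-q/2) := by
      rw [hρdef, ← Real.rpow_mul hs.le]
      congr 1
      ring
    calc ∫⁻ y in (Metric.closedBall R ρ)ᶜ,
        ENNReal.ofReal ((4 * π * s) ^ (-(3:ℝ)/2) * rexp (-‖x - y‖ ^ 2 / (4 * s)) * g y)
        ≤ ∫⁻ y in (Metric.closedBall R ρ)ᶜ, ENNReal.ofReal (s ^ (-q/2)) *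
            ENNReal.ofReal ((4 * π * s) ^ (-(3:ℝ)/2) * rexp (-‖x - y‖ ^ 2 / (4 * s))) := by
          refine setLIntegral_mono' measurableSet_closedBall.compl fun y hy => ?_
          rw [← ENNReal.ofReal_mul (rpow_nonneg hs.le _)]
          apply ENNReal.ofReal_le_ofReal
          have hylt : ρ < ‖y - R‖ := by
            simp only [mem_compl_iff, Metric.mem_closedBall, not_le, dist_eq_norm] at hy
            exact hy
          have hgy : g y ≤ s ^ (-q/2) := by
            rw [hg, ← hρq]
            exact Real.rpow_le_rpow_of_nonpos hρ hylt.le (by linarith)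
          have hker : (0:ℝ) ≤ (4 * π * s) ^ (-(3:ℝ)/2) * rexp (-‖x - y‖ ^ 2 / (4 * s)) := by
            positivity
          calc (4 * π * s) ^ (-(3:ℝ)/2) * rexp (-‖x - y‖ ^ 2 / (4 * s)) * g y
              ≤ (4 * π * s) ^ (-(3:ℝ)/2) * rexp (-‖x - y‖ ^ 2 / (4 * s)) * (s ^ (-q/2)) := by
                gcongr
            _ = s ^ (-q/2) * ((4 * π * s) ^ (-(3:ℝ)/2) * rexp (-‖x - y‖ ^ 2 / (4 * s))) := by ring
      _ ≤ ∫⁻ y, ENNReal.ofReal (s ^ (-q/2)) *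
            ENNReal.ofReal ((4 * π * s) ^ (-(3:ℝ)/2) * rexp (-‖x - y‖ ^ 2 / (4 * s))) :=
          setLIntegral_le_lintegral _ _
      _ = ENNReal.ofReal (s ^ (-q/2)) := by
          rw [lintegral_const_mul' _ _ ENNReal.ofReal_ne_top, gauss_eq s hs x, mul_one]
  calc (∫⁻ y in Metric.closedBall R ρ,
        ENNReal.ofReal ((4 * π * s) ^ (-(3:ℝ)/2) * rexp (-‖x - y‖ ^ 2 / (4 * s)) * g y)) +
        ∫⁻ y in (Metric.closedBall R ρ)ᶜ,
          ENNReal.ofReal ((4 * π * s) ^ (-(3:ℝ)/2) * rexp (-‖x - y‖ ^ 2 / (4 * s)) * g y)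
      ≤ ENNReal.ofReal (K * s ^ (-q/2)) * B + ENNReal.ofReal (s ^ (-q/2)) := add_le_add near far
    _ ≤ ENNReal.ofReal ((K + 1) * s ^ (-q/2)) * B + ENNReal.ofReal ((K + 1) * s ^ (-q/2)) * 1 := by
        refine add_le_add (mul_le_mul_left (ENNReal.ofReal_le_ofReal ?_) B) ?_
        · exact mul_le_mul_of_nonneg_right (by linarith) (rpow_nonneg hs.le _)
        · rw [mul_one]
          exact ENNReal.ofReal_le_ofReal
            (le_mul_of_one_le_left (rpow_nonneg hs.le _) (by linarith))
    _ = ENNReal.ofReal ((K + 1) * s ^ (-q/2)) * (B + 1) := by rw [mul_add]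

/-- For every `R ∈ ℝ³` and `0 < q < 2`, the function `y ↦ ‖y - R‖^{-q}` (defined
arbitrarily at `y = R`) satisfies the Kato condition on `ℝ³`. -/
theorem isKato_inverse_norm_rpow (R : EuclideanSpace ℝ (Fin 3)) (q : ℝ)
    (hq0 : 0 < q) (hq2 : q < 2) (v : EuclideanSpace ℝ (Fin 3) → ℝ)
    (hv : ∀ y : EuclideanSpace ℝ (Fin 3), y ≠ R → v y = ‖y - R‖ ^ (-q)) :
    IsKato v := by
  have hq3 : q < 3 := by linarith
  unfold IsKato
  set B := volume (Metric.ball (0 : EuclideanSpace ℝ (Fin 3)) 1) with hB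
  set C : ℝ := (1 + q / (3 - q)) * (4 * Real.pi) ^ (-(3:ℝ)/2) + 1 with hC
  have hCnn : 0 ≤ C := by
    have h1 : (0:ℝ) < 3 - q := by linarith
    rw [hC]; positivity
  have hBtop : B + 1 ≠ ⊤ := ENNReal.add_ne_top.mpr ⟨measure_ball_lt_top.ne, ENNReal.one_ne_top⟩
  set p : ℝ := -q/2 + 1 with hp
  have hppos : 0 < p := by rw [hp]; linarith
  set h : ℝ → ℝ≥0∞ := fun t => ENNReal.ofReal C * ENNReal.ofReal (t ^ p / p) * (B + 1) with hh
  refine tendsto_of_tendsto_of_tendsto_of_le_of_le' (g := fun _ => (0:ℝ≥0∞)) (h := h)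
    tendsto_const_nhds ?_ (Eventually.of_forall fun t => zero_le) ?_
  · -- h → 0
    have h1 : Filter.Tendsto (fun t : ℝ => t ^ p) (nhdsWithin 0 (Set.Ioi 0)) (nhds 0) := by
      have h2 := (Real.continuousAt_rpow_const 0 p (Or.inr hppos.le)).tendsto
      rw [Real.zero_rpow hppos.ne'] at h2
      exact h2.mono_left nhdsWithin_le_nhds
    have h2 : Filter.Tendsto (fun t : ℝ => ENNReal.ofReal (t ^ p / p))
        (nhdsWithin 0 (Set.Ioi 0)) (nhds 0) := by
      have h3 := ENNReal.tendsto_ofReal (h1.div_const p)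
      simpa using h3
    have h4 : Filter.Tendsto h (nhdsWithin 0 (Set.Ioi 0))
        (nhds (ENNReal.ofReal C * 0 * (B + 1))) :=
      ENNReal.Tendsto.mul_const
        (ENNReal.Tendsto.const_mul h2 (Or.inr ENNReal.ofReal_ne_top)) (Or.inr hBtop)
    simpa using h4
  · filter_upwards [self_mem_nhdsWithin] with t ht
    simp only [Fintype.card_fin, Nat.cast_ofNat]
    refine iSup_le fun x => ?_
    have ht0 : (0:ℝ) < t := ht
    calc ∫⁻ s in Set.Ioc (0:ℝ) t, ∫⁻ y,
          ENNReal.ofReal ((4 * π * s) ^ (-(3:ℝ) / 2) * rexp (-‖x - y‖ ^ 2 / (4 * s)) * |v y|)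
        ≤ ∫⁻ s in Set.Ioc (0:ℝ) t, ENNReal.ofReal C * ENNReal.ofReal (s ^ (-q/2)) * (B + 1) := by
          refine setLIntegral_mono' measurableSet_Ioc fun s hs => ?_
          have hb := inner_bound q hq0 hq2 R v hv hs.1 x
          rw [← hC, ← hB, ENNReal.ofReal_mul hCnn] at hb
          exact hb
      _ = h t := by
          rw [lintegral_mul_const' _ _ hBtop, lintegral_const_mul' _ _ ENNReal.ofReal_ne_top]
          have hint : IntegrableOn (fun s : ℝ => s ^ (-q/2)) (Set.Ioc 0 t) :=
            (intervalIntegrable_iff_integrableOn_Ioc_of_le ht0.le).mp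
              (intervalIntegral.intervalIntegrable_rpow' (by linarith))
          rw [← ofReal_integral_eq_lintegral_ofReal hint
            (ae_restrict_of_forall_mem measurableSet_Ioc fun s hs => rpow_nonneg hs.1.le _)]
          have : ∫ s in Set.Ioc (0:ℝ) t, s ^ (-q/2) = t ^ p / p := by
            rw [← intervalIntegral.integral_of_le ht0.le,
              integral_rpow (Or.inl (by linarith)),
              Real.zero_rpow (by rw [← hp]; exact hppos.ne'), ← hp, sub_zero]
          rw [this, hh]
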